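/- The quaternionic sine function sin : ℍ → ℍ is H-differentiable at every point z ∈ ℍ with H-derivative cos z. -/

import Mathlib

open scoped Quaternion
open Filter Topology

/-- A function `f : ℍ → ℍ` is H-differentiable at `z₀` with H-derivative `d` if there exist
sequences of quaternions `A, B` with `∑ ‖A k‖ * ‖B k‖ < ∞` such that
`f (z₀ + h) - f z₀ = ∑' k, A k * h * B k + ω h` with `‖ω h‖ / ‖h‖ → 0` as `h → 0`,
and `d = ∑' k, A k * B k`. -/
def HDiffAt (f : ℍ[ℝ] → ℍ[ℝ]) (z₀ d : ℍ[ℝ]) : Prop :=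
  ∃ A B : ℕ → ℍ[ℝ],
    (Summable fun k => ‖A k‖ * ‖B k‖) ∧
    Filter.Tendsto
      (fun h : ℍ[ℝ] => ‖f (z₀ + h) - f z₀ - ∑' k, A k * h * B k‖ / ‖h‖)
      (𝓝[≠] (0 : ℍ[ℝ])) (𝓝 0) ∧
    d = ∑' k, A k * B k

/-- The quaternionic sine, defined by its power series. -/
noncomputable def qsin (z : ℍ[ℝ]) : ℍ[ℝ] :=
  ∑' n : ℕ, ((-1 : ℝ) ^ n / (2 * n + 1).factorial) • z ^ (2 * n + 1)

/-- The quaternionic cosine, defined by its power series. -/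
noncomputable def qcos (z : ℍ[ℝ]) : ℍ[ℝ] :=
  ∑' n : ℕ, ((-1 : ℝ) ^ n / (2 * n).factorial) • z ^ (2 * n)

namespace QSinAux
noncomputable def c (n : ℕ) : ℝ := (-1 : ℝ) ^ n / (2 * n + 1).factorial

lemma abs_c (n : ℕ) : |c n| = 1 / (2 * n + 1).factorial := by
  unfold c
  rw [abs_div, abs_pow, abs_neg, abs_one, one_pow, abs_of_nonneg]
  positivity

lemma norm_c (n : ℕ) : ‖c n‖ = 1 / (2 * n + 1).factorial := by
  rw [Real.norm_eq_abs, abs_c]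

lemma fact_succ_real (n : ℕ) :
    (((2 * n + 1).factorial : ℝ)) = (2 * n + 1) * (2 * n).factorial := by
  exact_mod_cast Nat.factorial_succ (2 * n)

/-- `∑_{i<m} z^i h z^(m-1-i)`, the formal first-order term of `(z+h)^m - z^m`. -/
noncomputable def L (z h : ℍ[ℝ]) (m : ℕ) : ℍ[ℝ] :=
  ∑ i ∈ Finset.range m, z ^ i * h * z ^ (m - 1 - i)

lemma L_zero (z h : ℍ[ℝ]) : L z h 0 = 0 := by simp [L]

lemma L_succ (z h : ℍ[ℝ]) (m : ℕ) : L z h (m + 1) = L z h m * z + z ^ m * h := by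
  unfold L
  rw [Finset.sum_range_succ, Finset.sum_mul]
  congr 1
  · refine Finset.sum_congr rfl fun i hi => ?_
    rw [Finset.mem_range] at hi
    have h1 : m + 1 - 1 - i = (m - 1 - i) + 1 := by omega
    rw [h1, pow_succ, ← mul_assoc]
  · have : m + 1 - 1 - m = 0 := by omega
    rw [this, pow_zero, mul_one]

lemma norm_L_le (z h : ℍ[ℝ]) (m : ℕ) :
    ‖L z h m‖ ≤ m * ‖z‖ ^ (m - 1) * ‖h‖ := by
  unfold L
  calc ‖∑ i ∈ Finset.range m, z ^ i * h * z ^ (m - 1 - i)‖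
      ≤ ∑ i ∈ Finset.range m, ‖z ^ i * h * z ^ (m - 1 - i)‖ := norm_sum_le _ _
    _ = ∑ i ∈ Finset.range m, ‖z‖ ^ (m - 1) * ‖h‖ := by
        refine Finset.sum_congr rfl fun i hi => ?_
        rw [Finset.mem_range] at hi
        have hmi : i + (m - 1 - i) = m - 1 := by omega
        rw [norm_mul, norm_mul, norm_pow, norm_pow, mul_right_comm, ← pow_add, hmi]
    _ = m * ‖z‖ ^ (m - 1) * ‖h‖ := by
        rw [Finset.sum_const, Finset.card_range, nsmul_eq_mul]; ring

lemma pow_sub_pow_eq (z h : ℍ[ℝ]) (m : ℕ) :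
    (z + h) ^ (m + 1) - z ^ (m + 1)
      = ((z + h) ^ m - z ^ m) * (z + h) + z ^ m * h := by
  rw [pow_succ, pow_succ]; noncomm_ring

lemma norm_pow_sub_pow_le (z h : ℍ[ℝ]) (hh : ‖h‖ ≤ 1) (m : ℕ) :
    ‖(z + h) ^ m - z ^ m‖ ≤ m * ‖h‖ * (‖z‖ + 1) ^ (m - 1) := by
  induction m with
  | zero => simp
  | succ m ih =>
    have hz1 : ‖z + h‖ ≤ ‖z‖ + 1 := by
      calc ‖z + h‖ ≤ ‖z‖ + ‖h‖ := norm_add_le _ _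
        _ ≤ ‖z‖ + 1 := by linarith
    have hzm : ‖z ^ m‖ ≤ (‖z‖ + 1) ^ m := by
      rw [norm_pow]
      exact pow_le_pow_left₀ (norm_nonneg z) (by linarith) m
    have b1 : ‖(z + h) ^ m - z ^ m‖ * ‖z + h‖
        ≤ (m * ‖h‖ * (‖z‖ + 1) ^ (m - 1)) * (‖z‖ + 1) :=
      mul_le_mul ih hz1 (norm_nonneg _) (by positivity)
    have b2 : ‖z ^ m‖ * ‖h‖ ≤ (‖z‖ + 1) ^ m * ‖h‖ :=
      mul_le_mul_of_nonneg_right hzm (norm_nonneg h)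
    have b0 : ‖(z + h) ^ (m + 1) - z ^ (m + 1)‖
        ≤ (m * ‖h‖ * (‖z‖ + 1) ^ (m - 1)) * (‖z‖ + 1) + (‖z‖ + 1) ^ m * ‖h‖ := by
      rw [pow_sub_pow_eq]
      refine (norm_add_le _ _).trans ?_
      rw [norm_mul, norm_mul]; linarith
    refine b0.trans ?_
    cases m with
    | zero => simp
    | succ k =>
      exact le_of_eq (by push_cast [Nat.add_sub_cancel]; rw [pow_succ]; ring)

lemma D_succ (z h : ℍ[ℝ]) (m : ℕ) :
    (z + h) ^ (m + 1) - z ^ (m + 1) - L z h (m + 1)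
      = ((z + h) ^ m - z ^ m - L z h m) * z + ((z + h) ^ m - z ^ m) * h := by
  rw [L_succ, pow_succ, pow_succ]; noncomm_ring

lemma norm_D_le (z h : ℍ[ℝ]) (hh : ‖h‖ ≤ 1) (m : ℕ) :
    ‖(z + h) ^ m - z ^ m - L z h m‖ ≤ m * (‖z‖ + 1) ^ (m - 1) * ‖h‖ ^ 2 := by
  induction m with
  | zero => simp [L_zero]
  | succ m ih =>
    have hx0 : (0:ℝ) ≤ ‖z‖ + 1 := by positivity
    have b1 : ‖(z + h) ^ m - z ^ m - L z h m‖ * ‖z‖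
        ≤ (m * (‖z‖ + 1) ^ (m - 1) * ‖h‖ ^ 2) * ‖z‖ :=
      mul_le_mul_of_nonneg_right ih (norm_nonneg z)
    have b2 : ‖(z + h) ^ m - z ^ m‖ * ‖h‖
        ≤ (m * ‖h‖ * (‖z‖ + 1) ^ (m - 1)) * ‖h‖ :=
      mul_le_mul_of_nonneg_right (norm_pow_sub_pow_le z h hh m) (norm_nonneg h)
    have b0 : ‖(z + h) ^ (m + 1) - z ^ (m + 1) - L z h (m + 1)‖
        ≤ (m * (‖z‖ + 1) ^ (m - 1) * ‖h‖ ^ 2) * ‖z‖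
          + (m * ‖h‖ * (‖z‖ + 1) ^ (m - 1)) * ‖h‖ := by
      rw [D_succ]
      refine (norm_add_le _ _).trans ?_
      rw [norm_mul, norm_mul]; linarith
    refine b0.trans ?_
    cases m with
    | zero => simpa using sq_nonneg ‖h‖
    | succ k =>
      push_cast [Nat.add_sub_cancel]
      rw [pow_succ (‖z‖ + 1) k]
      nlinarith [mul_nonneg (mul_nonneg (sq_nonneg ‖h‖) (pow_nonneg hx0 k)) hx0]

lemma summable_even (y : ℝ) : Summable fun n : ℕ => y ^ (2 * n) / (2 * n).factorial := by
  have h := (Real.summable_pow_div_factorial y).comp_injective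
    (i := fun n : ℕ => 2 * n) (fun a b hab => by simp only at hab; omega)
  exact h

lemma summable_odd (y : ℝ) : Summable fun n : ℕ => y ^ (2 * n + 1) / (2 * n + 1).factorial := by
  have h := (Real.summable_pow_div_factorial y).comp_injective
    (i := fun n : ℕ => 2 * n + 1) (fun a b hab => by simp only at hab; omega)
  exact h

lemma summable_smul_pow (w : ℍ[ℝ]) :
    Summable fun n : ℕ => c n • w ^ (2 * n + 1) := by
  refine Summable.of_norm ?_
  refine (summable_odd ‖w‖).congr fun n => ?_
  rw [norm_smul, norm_c, norm_pow]
  ring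

lemma summable_smul_L (z h : ℍ[ℝ]) :
    Summable fun n : ℕ => c n • L z h (2 * n + 1) := by
  refine Summable.of_norm ?_
  refine Summable.of_nonneg_of_le (fun n => norm_nonneg _) (fun n => ?_)
    (((summable_even ‖z‖).mul_left ‖h‖))
  rw [norm_smul, norm_c]
  have h1 : ‖L z h (2 * n + 1)‖ ≤ (2 * n + 1) * ‖z‖ ^ (2 * n) * ‖h‖ := by
    have := norm_L_le z h (2 * n + 1)
    simpa using this
  calc (1 / ((2 * n + 1).factorial : ℝ)) * ‖L z h (2 * n + 1)‖
      ≤ (1 / ((2 * n + 1).factorial : ℝ)) * ((2 * n + 1) * ‖z‖ ^ (2 * n) * ‖h‖) := by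
        gcongr
    _ = ‖h‖ * (‖z‖ ^ (2 * n) / (2 * n).factorial) := by
        rw [fact_succ_real]
        have h2 : ((2:ℝ) * n + 1) ≠ 0 := by positivity
        have h3 : ((2 * n).factorial : ℝ) ≠ 0 := by positivity
        field_simp


lemma qsin_eq (w : ℍ[ℝ]) : qsin w = ∑' n : ℕ, c n • w ^ (2 * n + 1) := rfl

lemma coeff_eq (n : ℕ) : ((2 * n + 1 : ℕ) : ℝ) * c n = (-1 : ℝ) ^ n / (2 * n).factorial := by
  unfold c
  rw [fact_succ_real]
  have h2 : ((2 * n + 1 : ℕ) : ℝ) ≠ 0 := by positivity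
  have h3 : ((2 * n).factorial : ℝ) ≠ 0 := by positivity
  push_cast at h2 ⊢
  field_simp

/-- The A-sequence over pairs. -/
noncomputable def Afun (z : ℍ[ℝ]) : ℕ × ℕ → ℍ[ℝ] :=
  fun p => if p.2 ≤ 2 * p.1 then c p.1 • z ^ p.2 else 0

/-- The B-sequence over pairs. -/
noncomputable def Bfun (z : ℍ[ℝ]) : ℕ × ℕ → ℍ[ℝ] :=
  fun p => if p.2 ≤ 2 * p.1 then z ^ (2 * p.1 - p.2) else 0

lemma normAB (z : ℍ[ℝ]) (p : ℕ × ℕ) :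
    ‖Afun z p‖ * ‖Bfun z p‖
      = if p.2 ≤ 2 * p.1 then ‖z‖ ^ (2 * p.1) / (2 * p.1 + 1).factorial else 0 := by
  rcases p with ⟨n, i⟩
  by_cases hi : i ≤ 2 * n
  · simp only [Afun, Bfun, if_pos hi, norm_smul, norm_c, norm_pow]
    have hni : i + (2 * n - i) = 2 * n := by omega
    calc 1 / ((2 * n + 1).factorial : ℝ) * ‖z‖ ^ i * ‖z‖ ^ (2 * n - i)
        = ‖z‖ ^ (i + (2 * n - i)) / (2 * n + 1).factorial := by rw [pow_add]; ring
      _ = ‖z‖ ^ (2 * n) / (2 * n + 1).factorial := by rw [hni]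
  · simp [Afun, Bfun, if_neg hi]

lemma AB_mul (z : ℍ[ℝ]) (p : ℕ × ℕ) :
    Afun z p * Bfun z p = if p.2 ≤ 2 * p.1 then c p.1 • z ^ (2 * p.1) else 0 := by
  rcases p with ⟨n, i⟩
  by_cases hi : i ≤ 2 * n
  · simp only [Afun, Bfun, if_pos hi, smul_mul_assoc, ← pow_add]
    congr 2
    omega
  · simp [Afun, Bfun, if_neg hi]

lemma AhB (z h : ℍ[ℝ]) (p : ℕ × ℕ) :
    Afun z p * h * Bfun z p
      = if p.2 ≤ 2 * p.1 then c p.1 • (z ^ p.2 * h * z ^ (2 * p.1 - p.2)) else 0 := by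
  rcases p with ⟨n, i⟩
  by_cases hi : i ≤ 2 * n
  · simp only [Afun, Bfun, if_pos hi, smul_mul_assoc]
  · simp [Afun, Bfun, if_neg hi]

lemma summable_indicator (u : ℕ → ℝ) (hu0 : ∀ n, 0 ≤ u n)
    (hu : Summable fun n : ℕ => (2 * (n : ℝ) + 1) * u n) :
    Summable (fun p : ℕ × ℕ => if p.2 ≤ 2 * p.1 then u p.1 else 0) := by
  rw [summable_prod_of_nonneg (by
    intro p
    dsimp only
    by_cases hi : p.2 ≤ 2 * p.1
    · rw [if_pos hi]; exact hu0 p.1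
    · rw [if_neg hi]
      exact le_rfl)]
  constructor
  · intro n
    refine summable_of_ne_finset_zero (s := Finset.range (2 * n + 1)) fun i hi => ?_
    rw [Finset.mem_range] at hi
    exact if_neg (by omega)
  · refine hu.congr fun n => ?_
    dsimp only
    rw [tsum_eq_sum (s := Finset.range (2 * n + 1)) (fun i hi => by
      rw [Finset.mem_range] at hi; exact if_neg (by omega))]
    rw [Finset.sum_congr rfl (fun i hi => if_pos (by
      rw [Finset.mem_range] at hi; omega)), Finset.sum_const, Finset.card_range,
      nsmul_eq_mul]
    push_cast
    ring

lemma summable_AB (z : ℍ[ℝ]) : Summable fun p : ℕ × ℕ => ‖Afun z p‖ * ‖Bfun z p‖ := by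
  refine (summable_indicator (fun n => ‖z‖ ^ (2 * n) / (2 * n + 1).factorial)
    (fun n => by positivity) ?_).congr fun p => (normAB z p).symm
  refine (summable_even ‖z‖).congr fun n => ?_
  rw [fact_succ_real]
  have h2 : ((2 : ℝ) * n + 1) ≠ 0 := by positivity
  have h3 : ((2 * n).factorial : ℝ) ≠ 0 := by positivity
  field_simp

lemma summable_AB' (z : ℍ[ℝ]) : Summable fun p : ℕ × ℕ => Afun z p * Bfun z p :=
  Summable.of_norm ((summable_AB z).congr fun p => by rw [norm_mul])

lemma summable_AhB (z h : ℍ[ℝ]) : Summable fun p : ℕ × ℕ => Afun z p * h * Bfun z p := by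
  refine Summable.of_norm (((summable_AB z).mul_right ‖h‖).congr fun p => ?_)
  rw [norm_mul, norm_mul]
  ring

lemma summable_inner_AhB (z h : ℍ[ℝ]) (n : ℕ) :
    Summable fun i : ℕ => Afun z (n, i) * h * Bfun z (n, i) := by
  refine summable_of_ne_finset_zero (s := Finset.range (2 * n + 1)) fun i hi => ?_
  rw [Finset.mem_range] at hi
  rw [AhB]
  exact if_neg (by simpa using by omega)

lemma summable_inner_AB (z : ℍ[ℝ]) (n : ℕ) :
    Summable fun i : ℕ => Afun z (n, i) * Bfun z (n, i) := by
  refine summable_of_ne_finset_zero (s := Finset.range (2 * n + 1)) fun i hi => ?_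
  rw [Finset.mem_range] at hi
  rw [AB_mul]
  exact if_neg (by simpa using by omega)

lemma tsum_AB (z : ℍ[ℝ]) : ∑' p : ℕ × ℕ, Afun z p * Bfun z p = qcos z := by
  rw [Summable.tsum_prod' (summable_AB' z) (summable_inner_AB z)]
  unfold qcos
  refine tsum_congr fun n => ?_
  rw [show (fun i => Afun z (n, i) * Bfun z (n, i))
      = fun i : ℕ => if i ≤ 2 * n then c n • z ^ (2 * n) else 0 from funext fun i => AB_mul z (n, i)]
  rw [tsum_eq_sum (s := Finset.range (2 * n + 1)) (fun i hi => by
    rw [Finset.mem_range] at hi; exact if_neg (by omega))]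
  rw [Finset.sum_congr rfl (fun i hi => if_pos (by rw [Finset.mem_range] at hi; omega)),
    Finset.sum_const, Finset.card_range, ← Nat.cast_smul_eq_nsmul ℝ, smul_smul, coeff_eq]

lemma tsum_AhB (z h : ℍ[ℝ]) :
    ∑' p : ℕ × ℕ, Afun z p * h * Bfun z p = ∑' n : ℕ, c n • L z h (2 * n + 1) := by
  rw [Summable.tsum_prod' (summable_AhB z h) (summable_inner_AhB z h)]
  refine tsum_congr fun n => ?_
  rw [show (fun i => Afun z (n, i) * h * Bfun z (n, i))
      = fun i : ℕ => if i ≤ 2 * n then c n • (z ^ i * h * z ^ (2 * n - i)) else 0 from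
      funext fun i => AhB z h (n, i)]
  rw [tsum_eq_sum (s := Finset.range (2 * n + 1)) (fun i hi => by
    rw [Finset.mem_range] at hi; exact if_neg (by omega))]
  rw [Finset.sum_congr rfl (fun i hi => if_pos (by rw [Finset.mem_range] at hi; omega))]
  unfold L
  rw [Finset.smul_sum]
  rfl

end QSinAux

open QSinAux in
/-- The quaternionic sine is H-differentiable at every point with H-derivative the cosine. -/
theorem hDiffAt_qsin (z : ℍ[ℝ]) : HDiffAt qsin z (qcos z) := by
  classical
  let e : ℕ ≃ ℕ × ℕ := (Denumerable.eqv (ℕ × ℕ)).symm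
  refine ⟨fun k => Afun z (e k), fun k => Bfun z (e k), ?_, ?_, ?_⟩
  · exact (summable_AB z).comp_injective e.injective
  · set C := ∑' n : ℕ, (‖z‖ + 1) ^ (2 * n) / (2 * n).factorial with hC
    have key : ∀ h : ℍ[ℝ], ‖h‖ ≤ 1 →
        ‖qsin (z + h) - qsin z - ∑' k, Afun z (e k) * h * Bfun z (e k)‖ ≤ C * ‖h‖ ^ 2 := by
      intro h hh
      have hSe : (∑' k, Afun z (e k) * h * Bfun z (e k))
          = ∑' n : ℕ, c n • L z h (2 * n + 1) := by
        rw [e.tsum_eq (fun p => Afun z p * h * Bfun z p), tsum_AhB]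
      have hE : qsin (z + h) - qsin z - ∑' k, Afun z (e k) * h * Bfun z (e k)
          = ∑' n : ℕ, c n • ((z + h) ^ (2 * n + 1) - z ^ (2 * n + 1) - L z h (2 * n + 1)) := by
        rw [qsin_eq, qsin_eq, hSe,
          ← Summable.tsum_sub (summable_smul_pow (z + h)) (summable_smul_pow z),
          ← Summable.tsum_sub ((summable_smul_pow (z + h)).sub (summable_smul_pow z))
            (summable_smul_L z h)]
        exact tsum_congr fun n => by rw [smul_sub, smul_sub]
      rw [hE]
      have hb : ∀ n : ℕ,
          ‖c n • ((z + h) ^ (2 * n + 1) - z ^ (2 * n + 1) - L z h (2 * n + 1))‖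
            ≤ ((‖z‖ + 1) ^ (2 * n) / (2 * n).factorial) * ‖h‖ ^ 2 := by
        intro n
        rw [norm_smul, norm_c]
        have h1 := norm_D_le z h hh (2 * n + 1)
        simp only [Nat.add_sub_cancel] at h1
        push_cast at h1
        calc (1 / ((2 * n + 1).factorial : ℝ))
              * ‖(z + h) ^ (2 * n + 1) - z ^ (2 * n + 1) - L z h (2 * n + 1)‖
            ≤ (1 / ((2 * n + 1).factorial : ℝ))
              * ((2 * (n : ℝ) + 1) * (‖z‖ + 1) ^ (2 * n) * ‖h‖ ^ 2) := by
              gcongr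
          _ = ((‖z‖ + 1) ^ (2 * n) / (2 * n).factorial) * ‖h‖ ^ 2 := by
              rw [fact_succ_real]
              have h2 : ((2 : ℝ) * n + 1) ≠ 0 := by positivity
              have h3 : ((2 * n).factorial : ℝ) ≠ 0 := by positivity
              field_simp
      have hbs : Summable fun n : ℕ => ((‖z‖ + 1) ^ (2 * n) / (2 * n).factorial) * ‖h‖ ^ 2 :=
        (summable_even (‖z‖ + 1)).mul_right _
      have hns : Summable fun n : ℕ =>
          ‖c n • ((z + h) ^ (2 * n + 1) - z ^ (2 * n + 1) - L z h (2 * n + 1))‖ :=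
        Summable.of_nonneg_of_le (fun n => norm_nonneg _) hb hbs
      calc ‖∑' n : ℕ, c n • ((z + h) ^ (2 * n + 1) - z ^ (2 * n + 1) - L z h (2 * n + 1))‖
          ≤ ∑' n : ℕ, ‖c n • ((z + h) ^ (2 * n + 1) - z ^ (2 * n + 1) - L z h (2 * n + 1))‖ :=
            norm_tsum_le_tsum_norm hns
        _ ≤ ∑' n : ℕ, ((‖z‖ + 1) ^ (2 * n) / (2 * n).factorial) * ‖h‖ ^ 2 :=
            Summable.tsum_le_tsum hb hns hbs
        _ = C * ‖h‖ ^ 2 := by rw [hC, tsum_mul_right]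
    have h1 : ∀ᶠ w : ℍ[ℝ] in 𝓝[≠] (0 : ℍ[ℝ]), ‖w‖ ≤ 1 := by
      refine Filter.Eventually.filter_mono nhdsWithin_le_nhds ?_
      filter_upwards [Metric.closedBall_mem_nhds (0 : ℍ[ℝ]) one_pos] with w hw
      simpa [dist_zero_right] using hw
    have h2 : ∀ᶠ w : ℍ[ℝ] in 𝓝[≠] (0 : ℍ[ℝ]), w ≠ 0 := by
      filter_upwards [eventually_mem_nhdsWithin] with w hw
      simpa using hw
    refine squeeze_zero' (g := fun w : ℍ[ℝ] => C * ‖w‖)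
      (Filter.Eventually.of_forall fun w => by positivity) ?_ ?_
    · filter_upwards [h1, h2] with w hw1 hw2
      rw [div_le_iff₀ (norm_pos_iff.mpr hw2)]
      calc ‖qsin (z + w) - qsin z - ∑' k, Afun z (e k) * w * Bfun z (e k)‖
          ≤ C * ‖w‖ ^ 2 := key w hw1
        _ = C * ‖w‖ * ‖w‖ := by ring
    · have ht : Tendsto (fun w : ℍ[ℝ] => C * ‖w‖) (𝓝 0) (𝓝 (C * ‖(0 : ℍ[ℝ])‖)) :=
        (continuous_const.mul continuous_norm).tendsto 0
      simpa using ht.mono_left nhdsWithin_le_nhds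
  · have h1 : ∑' k, Afun z (e k) * Bfun z (e k) = ∑' p : ℕ × ℕ, Afun z p * Bfun z p :=
      e.tsum_eq (fun p => Afun z p * Bfun z p)
    rw [h1, tsum_AB]
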